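/- Let m ≥ 2 be an even integer. Define φ_ex(t) = π² e^{−π²t}, u_ex(x,y,t) = e^{−π²t}(cos(πx)+1)cos(πy), f_ex(x,y) = cos(πx)cos(πy), ũ_m(x,y,t) = u_ex(x,y,t) + m⁻¹ e^{−π²t}(cos(mπx)−1)cos(πy), f̃_m(x,y) = f_ex(x,y) + m·cos(mπx)cos(πy), g₀m(x,y) = ũ_m(x,y,0), g₁m(x,y) = ũ_m(x,y,1). Then: (a) ∂ₜũ_m − ∂ₓₓũ_m − ∂ᵧᵧũ_m = φ_ex(t)·f̃_m(x,y) for all (x,y,t); (b) ∂ₓũ_m(0,y,t) = ∂ₓũ_m(1,y,t) = ∂ᵧũ_m(x,0,t) = ∂ᵧũ_m(x,1,t) = 0 and ũ_m(1,y,t) = 0 for all x,y,t ∈ [0,1]; (c) ‖g₀m − u_ex(·,·,0)‖_{L²(Ω)} = √3/(2m) and ‖g₁m − u_ex(·,·,1)‖_{L²(Ω)} = e^{−π²}√3/(2m); (d) ‖f̃_m − f_ex‖_{L²(Ω)} = m/2. (Hence a data error of order 1/m produces a solution error of order m, so the inverse source problem is ill-posed.) -/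

import Mathlib

open Real intervalIntegral

/-- Exact time factor `φ_ex(t) = π² e^{−π²t}`. -/
noncomputable def phiEx (t : ℝ) : ℝ := π^2 * Real.exp (-π^2 * t)

/-- Exact solution `u_ex(x,y,t) = e^{−π²t}(cos(πx)+1)cos(πy)`. -/
noncomputable def uEx (x y t : ℝ) : ℝ :=
  Real.exp (-π^2 * t) * (Real.cos (π * x) + 1) * Real.cos (π * y)

/-- Exact source profile `f_ex(x,y) = cos(πx)cos(πy)`. -/
noncomputable def fEx (x y : ℝ) : ℝ := Real.cos (π * x) * Real.cos (π * y)

/-- Disturbed solution `ũ_m = u_ex + m⁻¹ e^{−π²t}(cos(mπx)−1)cos(πy)`. -/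
noncomputable def uDist (m : ℕ) (x y t : ℝ) : ℝ :=
  uEx x y t + (m:ℝ)⁻¹ * Real.exp (-π^2 * t) * (Real.cos ((m:ℝ) * π * x) - 1) * Real.cos (π * y)

/-- Disturbed source profile `f̃_m = f_ex + m cos(mπx) cos(πy)`. -/
noncomputable def fDist (m : ℕ) (x y : ℝ) : ℝ :=
  fEx x y + (m:ℝ) * Real.cos ((m:ℝ) * π * x) * Real.cos (π * y)

private lemma hda_cos (c x : ℝ) :
    HasDerivAt (fun s : ℝ => Real.cos (c * s)) (-(c * Real.sin (c * x))) x := by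
  have h : HasDerivAt (fun s : ℝ => c * s) c x := by
    simpa using (hasDerivAt_id x).const_mul c
  simpa [mul_comm] using h.cos

private lemma hda_sin (c x : ℝ) :
    HasDerivAt (fun s : ℝ => Real.sin (c * s)) (c * Real.cos (c * x)) x := by
  have h : HasDerivAt (fun s : ℝ => c * s) c x := by
    simpa using (hasDerivAt_id x).const_mul c
  simpa [mul_comm] using h.sin

private lemma hda_x (m : ℕ) (y t x : ℝ) :
    HasDerivAt (fun s => uDist m s y t)
      ((Real.exp (-π^2*t) * (-(π * Real.sin (π*x)))
        + (m:ℝ)⁻¹ * Real.exp (-π^2*t) * (-((m:ℝ)*π * Real.sin ((m:ℝ)*π*x)))) * Real.cos (π*y)) x := by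
  simp only [uDist, uEx]
  have h1 := (((hda_cos π x).add_const 1).const_mul (Real.exp (-π^2*t))).mul_const (Real.cos (π*y))
  have h2 := (((hda_cos ((m:ℝ)*π) x).sub_const 1).const_mul
      ((m:ℝ)⁻¹ * Real.exp (-π^2*t))).mul_const (Real.cos (π*y))
  refine (h1.add h2).congr_deriv ?_
  ring

private lemma deriv_x (m : ℕ) (y t : ℝ) :
    (deriv fun s => uDist m s y t) = fun x =>
      (Real.exp (-π^2*t) * (-(π * Real.sin (π*x)))
        + (m:ℝ)⁻¹ * Real.exp (-π^2*t) * (-((m:ℝ)*π * Real.sin ((m:ℝ)*π*x)))) * Real.cos (π*y) :=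
  funext fun x => (hda_x m y t x).deriv

private lemma iter2_x (m : ℕ) (y t x : ℝ) :
    iteratedDeriv 2 (fun s => uDist m s y t) x
      = (Real.exp (-π^2*t) * (-(π^2 * Real.cos (π*x)))
        + (m:ℝ)⁻¹ * Real.exp (-π^2*t) * (-(((m:ℝ)*π)^2 * Real.cos ((m:ℝ)*π*x)))) * Real.cos (π*y) := by
  rw [show (2:ℕ) = 1+1 from rfl, iteratedDeriv_succ, iteratedDeriv_one, deriv_x m y t]
  have h1 := ((((hda_sin π x).const_mul π).neg).const_mul (Real.exp (-π^2*t))).mul_const (Real.cos (π*y))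
  have h2 := ((((hda_sin ((m:ℝ)*π) x).const_mul ((m:ℝ)*π)).neg).const_mul
      ((m:ℝ)⁻¹ * Real.exp (-π^2*t))).mul_const (Real.cos (π*y))
  have := (h1.add h2).deriv
  rw [show (fun x =>
      (Real.exp (-π^2*t) * (-(π * Real.sin (π*x)))
        + (m:ℝ)⁻¹ * Real.exp (-π^2*t) * (-((m:ℝ)*π * Real.sin ((m:ℝ)*π*x)))) * Real.cos (π*y))
    = fun x => Real.exp (-π^2*t) * (-(π * Real.sin (π*x))) * Real.cos (π*y)
        + (m:ℝ)⁻¹ * Real.exp (-π^2*t) * (-((m:ℝ)*π * Real.sin ((m:ℝ)*π*x))) * Real.cos (π*y)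
    from funext fun x => by ring]
  erw [this]
  ring

private lemma hda_y (m : ℕ) (x t s : ℝ) :
    HasDerivAt (fun s => uDist m x s t)
      ((Real.exp (-π^2*t) * (Real.cos (π*x) + 1)
        + (m:ℝ)⁻¹ * Real.exp (-π^2*t) * (Real.cos ((m:ℝ)*π*x) - 1)) * (-(π * Real.sin (π*s)))) s := by
  simp only [uDist, uEx]
  have h1 := (hda_cos π s).const_mul (Real.exp (-π^2*t) * (Real.cos (π*x) + 1))
  have h2 := (hda_cos π s).const_mul ((m:ℝ)⁻¹ * Real.exp (-π^2*t) * (Real.cos ((m:ℝ)*π*x) - 1))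
  refine (h1.add h2).congr_deriv ?_
  ring

private lemma deriv_y (m : ℕ) (x t : ℝ) :
    (deriv fun s => uDist m x s t) = fun s =>
      (Real.exp (-π^2*t) * (Real.cos (π*x) + 1)
        + (m:ℝ)⁻¹ * Real.exp (-π^2*t) * (Real.cos ((m:ℝ)*π*x) - 1)) * (-(π * Real.sin (π*s))) :=
  funext fun s => (hda_y m x t s).deriv

private lemma iter2_y (m : ℕ) (x t y : ℝ) :
    iteratedDeriv 2 (fun s => uDist m x s t) y = -π^2 * uDist m x y t := by
  rw [show (2:ℕ) = 1+1 from rfl, iteratedDeriv_succ, iteratedDeriv_one, deriv_y m x t]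
  have h1 := (((hda_sin π y).const_mul π).neg).const_mul
    (Real.exp (-π^2*t) * (Real.cos (π*x) + 1)
      + (m:ℝ)⁻¹ * Real.exp (-π^2*t) * (Real.cos ((m:ℝ)*π*x) - 1))
  erw [h1.deriv]
  simp only [uDist, uEx]
  ring

private lemma deriv_t (m : ℕ) (x y t : ℝ) :
    deriv (uDist m x y) t = -π^2 * uDist m x y t := by
  have hE : HasDerivAt (fun τ => Real.exp (-π^2*τ)) (Real.exp (-π^2*t) * (-π^2)) t := by
    simpa using (((hasDerivAt_id t).const_mul (-π^2)).exp)
  have h1 := (hE.mul_const (Real.cos (π*x) + 1)).mul_const (Real.cos (π*y))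
  have h2 := ((hE.const_mul ((m:ℝ)⁻¹)).mul_const (Real.cos ((m:ℝ)*π*x) - 1)).mul_const (Real.cos (π*y))
  have h : HasDerivAt (uDist m x y) (-π^2 * uDist m x y t) t := by
    simp only [uDist, uEx]
    refine (h1.add h2).congr_deriv ?_
    ring
  exact h.deriv
private lemma int_cos01 (c : ℝ) (hc : c ≠ 0) :
    ∫ x in (0:ℝ)..1, Real.cos (c*x) = Real.sin c / c := by
  rw [intervalIntegral.integral_comp_mul_left Real.cos hc]
  simp [integral_cos]
  ring

private lemma int_cos_sq01 (c : ℝ) (hc : c ≠ 0) (hs : Real.sin c = 0) :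
    ∫ x in (0:ℝ)..1, Real.cos (c*x)^2 = 1/2 := by
  rw [intervalIntegral.integral_comp_mul_left (fun u => Real.cos u ^ 2) hc]
  simp [integral_cos_sq, hs, smul_eq_mul]
  field_simp

private lemma int_cosm1_sq (c : ℝ) (hc : c ≠ 0) (hs : Real.sin c = 0) :
    ∫ x in (0:ℝ)..1, (Real.cos (c*x) - 1)^2 = 3/2 := by
  have h3 : (fun x : ℝ => (Real.cos (c*x) - 1)^2)
      = fun x => Real.cos (c*x)^2 - 2 * Real.cos (c*x) + 1 := funext fun x => by ring
  have i1 : IntervalIntegrable (fun x : ℝ => Real.cos (c*x)^2) MeasureTheory.volume 0 1 :=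
    Continuous.intervalIntegrable (by continuity) 0 1
  have i2 : IntervalIntegrable (fun x : ℝ => 2 * Real.cos (c*x)) MeasureTheory.volume 0 1 :=
    Continuous.intervalIntegrable (by continuity) 0 1
  rw [h3, intervalIntegral.integral_add (i1.sub i2) intervalIntegrable_const,
    intervalIntegral.integral_sub i1 i2, intervalIntegral.integral_const_mul,
    int_cos_sq01 c hc hs, int_cos01 c hc, hs]
  norm_num

private lemma inner_int (A : ℝ) :
    ∫ y in (0:ℝ)..1, (A * Real.cos (π*y))^2 = A^2 / 2 := by
  simp only [mul_pow]
  rw [intervalIntegral.integral_const_mul, int_cos_sq01 π Real.pi_ne_zero Real.sin_pi]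
  ring
/-- The numerical ill-posedness example: for even `m ≥ 2`, the pair `(ũ_m, f̃_m)` solves the
heat-source system with data `g₀m = ũ_m(·,·,0)`, `g₁m = ũ_m(·,·,1)`; the data errors are
`√3/(2m)` and `e^{−π²}√3/(2m)` while the solution error is `m/2`. -/
theorem ill_posedness_example (m : ℕ) (hm : 2 ≤ m) (hme : Even m) :
    -- (a) the heat equation holds everywhere
    (∀ x y t : ℝ,
      deriv (uDist m x y) t - iteratedDeriv 2 (fun s => uDist m s y t) x
        - iteratedDeriv 2 (fun s => uDist m x s t) y = phiEx t * fDist m x y)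
    -- (b) boundary conditions
    ∧ (∀ y ∈ Set.Icc (0:ℝ) 1, ∀ t ∈ Set.Icc (0:ℝ) 1,
        deriv (fun s => uDist m s y t) 0 = 0 ∧ deriv (fun s => uDist m s y t) 1 = 0
          ∧ uDist m 1 y t = 0)
    ∧ (∀ x ∈ Set.Icc (0:ℝ) 1, ∀ t ∈ Set.Icc (0:ℝ) 1,
        deriv (fun s => uDist m x s t) 0 = 0 ∧ deriv (fun s => uDist m x s t) 1 = 0)
    -- (c) data errors
    ∧ Real.sqrt (∫ x in (0:ℝ)..1, ∫ y in (0:ℝ)..1, (uDist m x y 0 - uEx x y 0)^2)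
        = Real.sqrt 3 / (2 * m)
    ∧ Real.sqrt (∫ x in (0:ℝ)..1, ∫ y in (0:ℝ)..1, (uDist m x y 1 - uEx x y 1)^2)
        = Real.exp (-π^2) * Real.sqrt 3 / (2 * m)
    -- (d) solution error
    ∧ Real.sqrt (∫ x in (0:ℝ)..1, ∫ y in (0:ℝ)..1, (fDist m x y - fEx x y)^2)
        = (m:ℝ) / 2 := by
  have hm0 : (m:ℝ) ≠ 0 := Nat.cast_ne_zero.mpr (by omega)
  have hπ : (π:ℝ) ≠ 0 := Real.pi_ne_zero
  have hmπ : (m:ℝ) * π ≠ 0 := mul_ne_zero hm0 hπ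
  have hsin : Real.sin ((m:ℝ) * π) = 0 := Real.sin_nat_mul_pi m
  refine ⟨?_, ?_, ?_, ?_, ?_, ?_⟩
  · -- (a)
    intro x y t
    rw [deriv_t, iter2_x, iter2_y]
    simp only [phiEx, fDist, fEx, uDist, uEx]
    field_simp
    ring
  · -- (b) x-boundary
    intro y _ t _
    have hc1 : Real.cos ((m:ℝ)*π) = 1 := by
      obtain ⟨k, hk⟩ := hme
      have h2 : ((m:ℝ)*π) = (k:ℝ)*(2*π) := by subst hk; push_cast; ring
      rw [h2, Real.cos_nat_mul_two_pi]
    refine ⟨?_, ?_, ?_⟩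
    · rw [deriv_x]; simp
    · rw [deriv_x]
      simp [Real.sin_pi, mul_one, hsin]
    · simp only [uDist, uEx, mul_one, hc1, Real.cos_pi]
      ring
  · -- (b) y-boundary
    intro x _ t _
    constructor
    · rw [deriv_y]; simp
    · rw [deriv_y]; simp [Real.sin_pi]
  · -- (c) t = 0
    have hdiff : ∀ x y : ℝ, uDist m x y 0 - uEx x y 0
        = ((m:ℝ)⁻¹ * (Real.cos ((m:ℝ)*π*x) - 1)) * Real.cos (π*y) := by
      intro x y; simp [uDist]
    have key : ∀ x : ℝ, (∫ y in (0:ℝ)..1, (uDist m x y 0 - uEx x y 0)^2)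
        = ((m:ℝ)⁻¹ * (Real.cos ((m:ℝ)*π*x) - 1))^2 / 2 := by
      intro x; simp only [hdiff]; exact inner_int _
    simp only [key]
    have h4 : (fun x : ℝ => ((m:ℝ)⁻¹ * (Real.cos ((m:ℝ)*π*x) - 1))^2 / 2)
        = fun x => ((m:ℝ)⁻¹^2/2) * (Real.cos ((m:ℝ)*π*x) - 1)^2 := funext fun x => by ring
    rw [h4, intervalIntegral.integral_const_mul, int_cosm1_sq _ hmπ hsin]
    rw [show (m:ℝ)⁻¹^2/2 * (3/2) = (Real.sqrt 3 / (2*m))^2 by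
      rw [div_pow, Real.sq_sqrt (by norm_num : (3:ℝ) ≥ 0)]; field_simp]
    exact Real.sqrt_sq (by positivity)
  · -- (c) t = 1
    have hdiff : ∀ x y : ℝ, uDist m x y 1 - uEx x y 1
        = (((m:ℝ)⁻¹ * Real.exp (-π^2)) * (Real.cos ((m:ℝ)*π*x) - 1)) * Real.cos (π*y) := by
      intro x y; simp [uDist]
    have key : ∀ x : ℝ, (∫ y in (0:ℝ)..1, (uDist m x y 1 - uEx x y 1)^2)
        = (((m:ℝ)⁻¹ * Real.exp (-π^2)) * (Real.cos ((m:ℝ)*π*x) - 1))^2 / 2 := by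
      intro x; simp only [hdiff]; exact inner_int _
    simp only [key]
    have h4 : (fun x : ℝ => (((m:ℝ)⁻¹ * Real.exp (-π^2)) * (Real.cos ((m:ℝ)*π*x) - 1))^2 / 2)
        = fun x => (((m:ℝ)⁻¹ * Real.exp (-π^2))^2/2) * (Real.cos ((m:ℝ)*π*x) - 1)^2 :=
      funext fun x => by ring
    rw [h4, intervalIntegral.integral_const_mul, int_cosm1_sq _ hmπ hsin]
    rw [show ((m:ℝ)⁻¹ * Real.exp (-π^2))^2/2 * (3/2)
        = (Real.exp (-π^2) * Real.sqrt 3 / (2*m))^2 by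
      have h5 : (Real.sqrt 3)^2 = 3 := Real.sq_sqrt (by norm_num)
      simp only [div_pow, mul_pow, h5]
      field_simp]
    exact Real.sqrt_sq (by positivity)
  · -- (d)
    have hdiff : ∀ x y : ℝ, fDist m x y - fEx x y
        = ((m:ℝ) * Real.cos ((m:ℝ)*π*x)) * Real.cos (π*y) := by
      intro x y; simp [fDist]
    have key : ∀ x : ℝ, (∫ y in (0:ℝ)..1, (fDist m x y - fEx x y)^2)
        = ((m:ℝ) * Real.cos ((m:ℝ)*π*x))^2 / 2 := by
      intro x; simp only [hdiff]; exact inner_int _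
    simp only [key]
    have h4 : (fun x : ℝ => ((m:ℝ) * Real.cos ((m:ℝ)*π*x))^2 / 2)
        = fun x => ((m:ℝ)^2/2) * Real.cos ((m:ℝ)*π*x)^2 := funext fun x => by ring
    rw [h4, intervalIntegral.integral_const_mul, int_cos_sq01 _ hmπ hsin]
    rw [show (m:ℝ)^2/2 * (1/2) = ((m:ℝ)/2)^2 by ring]
    exact Real.sqrt_sq (by positivity)
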